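/- Define the Quicksort comparison count qc : List ℕ → ℕ recursively by qc([]) = 0 and qc(p :: l) = (length of l) + qc(filter of l by elements < p) + qc(filter of l by elements > p). Then for every n ≥ 1, the average of qc over all n! permutations of {1, …, n} equals 2(n+1)H_n − 4n, where H_n = Σ_{j=1}^{n} 1/j is the n-th harmonic number; i.e., (1/n!)·Σ_σ qc(σ) = 2(n+1)H_n − 4n, the sum being over all permutations σ of [1,…,n]. -/

import Mathlib

/-- Number of key comparisons made by Quicksort, using the first element as pivot. -/
def qc : List ℕ → ℕ
  | [] => 0
  | p :: l => l.length + qc (l.filter (fun x => x < p)) + qc (l.filter (fun x => p < x))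
termination_by l => l.length
decreasing_by
  all_goals exact Nat.lt_succ_of_le (by rw [List.length_unattach]; exact (List.length_filter_le _ _).trans List.length_attach.le)

namespace QCP

def fI (a b : ℕ) (σ : List ℕ) : Option ℕ :=
  (σ.filter (fun x => decide (a ≤ x ∧ x ≤ b))).head?

def g (a b : ℕ) (σ : List ℕ) : ℕ :=
  if a < b ∧ a ∈ σ ∧ b ∈ σ ∧ (fI a b σ = some a ∨ fI a b σ = some b) then 1 else 0

lemma fI_cons_out {a b p : ℕ} (l : List ℕ) (h : ¬ (a ≤ p ∧ p ≤ b)) :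
    fI a b (p :: l) = fI a b l := by
  unfold fI; rw [List.filter_cons]; simp [h]

lemma fI_cons_in {a b p : ℕ} (l : List ℕ) (h : a ≤ p ∧ p ≤ b) :
    fI a b (p :: l) = some p := by
  unfold fI; rw [List.filter_cons]; simp [h]

lemma fI_filter_lt {a b p : ℕ} (l : List ℕ) (h : b < p) :
    fI a b l = fI a b (l.filter (fun x => decide (x < p))) := by
  unfold fI
  rw [List.filter_filter]
  congr 1
  apply List.filter_congr
  intro x _
  by_cases hx : a ≤ x ∧ x ≤ b
  · have : x < p := by omega
    simp [hx, this]
  · simp [hx]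

lemma fI_filter_gt {a b p : ℕ} (l : List ℕ) (h : p < a) :
    fI a b l = fI a b (l.filter (fun x => decide (p < x))) := by
  unfold fI
  rw [List.filter_filter]
  congr 1
  apply List.filter_congr
  intro x _
  by_cases hx : a ≤ x ∧ x ≤ b
  · have : p < x := by omega
    simp [hx, this]
  · simp [hx]

lemma g_cons (p : ℕ) (l : List ℕ) (a b : ℕ) :
    g a b (p :: l) =
      (if a < b ∧ ((a = p ∧ b ∈ l) ∨ (b = p ∧ a ∈ l)) then 1 else 0)
        + g a b (l.filter (fun x => decide (x < p)))
        + g a b (l.filter (fun x => decide (p < x))) := by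
  by_cases hab : a < b
  · by_cases hbp : b < p
    · -- a < b < p : only small branch
      have hfi : fI a b (p :: l) = fI a b (l.filter (fun x => decide (x < p))) := by
        rw [fI_cons_out l (by omega), fI_filter_lt l hbp]
      have hB : g a b (l.filter (fun x => decide (p < x))) = 0 := by
        unfold g
        rw [if_neg]
        rintro ⟨-, -, hb, -⟩
        simp only [List.mem_filter, decide_eq_true_eq] at hb
        exact absurd hb.2 (by omega)
      have hpiv : ¬ (a < b ∧ ((a = p ∧ b ∈ l) ∨ (b = p ∧ a ∈ l))) := by
        rintro ⟨-, (⟨rfl, -⟩ | ⟨rfl, -⟩)⟩ <;> omega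
      rw [if_neg hpiv, hB]
      unfold g
      rw [hfi]
      have hma : (a ∈ p :: l) ↔ a ∈ l.filter (fun x => decide (x < p)) := by
        simp only [List.mem_cons, List.mem_filter, decide_eq_true_eq]
        constructor
        · rintro (rfl | h)
          · omega
          · exact ⟨h, by omega⟩
        · rintro ⟨h, -⟩; exact Or.inr h
      have hmb : (b ∈ p :: l) ↔ b ∈ l.filter (fun x => decide (x < p)) := by
        simp only [List.mem_cons, List.mem_filter, decide_eq_true_eq]
        constructor
        · rintro (rfl | h)
          · omega
          · exact ⟨h, by omega⟩
        · rintro ⟨h, -⟩; exact Or.inr h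
      simp only [hma, hmb, Nat.zero_add, Nat.add_zero]
    · by_cases hpa : p < a
      · -- p < a < b : only big branch
        have hfi : fI a b (p :: l) = fI a b (l.filter (fun x => decide (p < x))) := by
          rw [fI_cons_out l (by omega), fI_filter_gt l hpa]
        have hA : g a b (l.filter (fun x => decide (x < p))) = 0 := by
          unfold g
          rw [if_neg]
          rintro ⟨-, ha, -, -⟩
          simp only [List.mem_filter, decide_eq_true_eq] at ha
          exact absurd ha.2 (by omega)
        have hpiv : ¬ (a < b ∧ ((a = p ∧ b ∈ l) ∨ (b = p ∧ a ∈ l))) := by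
          rintro ⟨-, (⟨rfl, -⟩ | ⟨rfl, -⟩)⟩ <;> omega
        rw [if_neg hpiv, hA]
        unfold g
        rw [hfi]
        have hma : (a ∈ p :: l) ↔ a ∈ l.filter (fun x => decide (p < x)) := by
          simp only [List.mem_cons, List.mem_filter, decide_eq_true_eq]
          constructor
          · rintro (rfl | h)
            · omega
            · exact ⟨h, by omega⟩
          · rintro ⟨h, -⟩; exact Or.inr h
        have hmb : (b ∈ p :: l) ↔ b ∈ l.filter (fun x => decide (p < x)) := by
          simp only [List.mem_cons, List.mem_filter, decide_eq_true_eq]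
          constructor
          · rintro (rfl | h)
            · omega
            · exact ⟨h, by omega⟩
          · rintro ⟨h, -⟩; exact Or.inr h
        simp only [hma, hmb, Nat.zero_add, Nat.add_zero]
      · -- a ≤ p ≤ b
        have hfi : fI a b (p :: l) = some p := fI_cons_in l ⟨by omega, by omega⟩
        have hA : g a b (l.filter (fun x => decide (x < p))) = 0 := by
          unfold g
          rw [if_neg]
          rintro ⟨hab', -, hb, -⟩
          simp only [List.mem_filter, decide_eq_true_eq] at hb
          exact absurd hb.2 (by omega)
        have hB : g a b (l.filter (fun x => decide (p < x))) = 0 := by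
          unfold g
          rw [if_neg]
          rintro ⟨-, ha, -, -⟩
          simp only [List.mem_filter, decide_eq_true_eq] at ha
          exact absurd ha.2 (by omega)
        rw [hA, hB]; simp only [Nat.add_zero]
        unfold g
        rw [hfi]
        by_cases hap' : a = p
        · have hne : b ≠ p := by omega
          by_cases hbl : b ∈ l <;>
            simp [hap', hne, List.mem_cons, hbl, hab]
        · by_cases hbp' : b = p
          · have hne : a ≠ p := by omega
            by_cases hal : a ∈ l <;>
              simp [hbp', hne, List.mem_cons, hal, hab]
          · rw [if_neg, if_neg]
            · rintro ⟨-, (⟨h, -⟩ | ⟨h, -⟩)⟩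
              · exact hap' h
              · exact hbp' h
            · rintro ⟨-, -, -, (h | h)⟩
              · exact hap' (Option.some_injective _ h).symm
              · exact hbp' (Option.some_injective _ h).symm
  · simp [g, hab]


lemma len_split (p : ℕ) (l : List ℕ) (h : p ∉ l) :
    (l.filter (fun x => decide (x < p))).length
      + (l.filter (fun x => decide (p < x))).length = l.length := by
  induction l with
  | nil => simp
  | cons x t ih =>
    simp only [List.mem_cons, not_or] at h
    have ht := ih h.2
    have hx : ¬ p = x := h.1
    by_cases h1 : x < p
    · simp [List.filter_cons, h1, show ¬ p < x by omega]
      omega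
    · have h2 : p < x := by omega
      simp [List.filter_cons, h1, h2]
      omega

lemma count_filter (l : List ℕ) (hnd : l.Nodup) (F : Finset ℕ)
    (hF : l.toFinset ⊆ F) (c : ℕ → Bool) :
    (∑ b ∈ F, if b ∈ l ∧ c b = true then 1 else 0) = (l.filter c).length := by
  rw [← Finset.card_filter]
  have : F.filter (fun b => b ∈ l ∧ c b = true) = (l.filter c).toFinset := by
    ext b
    simp only [Finset.mem_filter, List.mem_toFinset, List.mem_filter]
    constructor
    · rintro ⟨-, h1, h2⟩; exact ⟨h1, h2⟩
    · rintro ⟨h1, h2⟩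
      exact ⟨hF (List.mem_toFinset.mpr h1), h1, h2⟩
  rw [this, List.toFinset_card_of_nodup (hnd.filter _)]

lemma qc_eq_sum (F : Finset ℕ) (σ : List ℕ) :
    σ.Nodup → σ.toFinset ⊆ F → qc σ = ∑ q ∈ F ×ˢ F, g q.1 q.2 σ := by
  induction σ using qc.induct with
  | case1 =>
    intro _ _
    simp [qc, g]
  | case2 p l ih1 ih2 =>
    rw [List.unattach_filter (g := fun x => decide (x < p)) (hf := fun _ _ => rfl),
      List.unattach_attach] at ih1
    rw [List.unattach_filter (g := fun x => decide (p < x)) (hf := fun _ _ => rfl),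
      List.unattach_attach] at ih2
    intro hnd hF
    have hpl : p ∉ l := (List.nodup_cons.mp hnd).1
    have hndl : l.Nodup := (List.nodup_cons.mp hnd).2
    have hFl : l.toFinset ⊆ F := by
      intro x hx
      exact hF (by simp only [List.toFinset_cons, Finset.mem_insert]; right; exact hx)
    have hpF : p ∈ F := hF (by simp)
    have hA : (l.filter (fun x => decide (x < p))).toFinset ⊆ F :=
      fun x hx => hFl (by
        simp only [List.mem_toFinset, List.mem_filter] at hx ⊢; exact hx.1)
    have hB : (l.filter (fun x => decide (p < x))).toFinset ⊆ F :=
      fun x hx => hFl (by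
        simp only [List.mem_toFinset, List.mem_filter] at hx ⊢; exact hx.1)
    have e1 := ih1 (hndl.filter _) hA
    have e2 := ih2 (hndl.filter _) hB
    have hsplit : ∀ q ∈ F ×ˢ F, g q.1 q.2 (p :: l) =
        ((if q.1 = p ∧ q.2 ∈ l ∧ p < q.2 then 1 else 0)
          + (if q.2 = p ∧ q.1 ∈ l ∧ q.1 < p then 1 else 0))
        + g q.1 q.2 (l.filter (fun x => decide (x < p)))
        + g q.1 q.2 (l.filter (fun x => decide (p < x))) := by
      intro q _
      rw [g_cons]
      congr 1
      congr 1
      by_cases h1 : q.1 = p ∧ q.2 ∈ l ∧ p < q.2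
      · rw [if_pos h1, if_pos, if_neg]
        · rintro ⟨h, -⟩; omega
        · exact ⟨by omega, Or.inl ⟨h1.1, h1.2.1⟩⟩
      · by_cases h2 : q.2 = p ∧ q.1 ∈ l ∧ q.1 < p
        · rw [if_neg h1, if_pos h2, if_pos]
          exact ⟨by omega, Or.inr ⟨h2.1, h2.2.1⟩⟩
        · rw [if_neg h1, if_neg h2, if_neg]
          rintro ⟨hlt, (⟨ha, hb⟩ | ⟨hb, ha⟩)⟩
          · exact h1 ⟨ha, hb, by omega⟩
          · exact h2 ⟨hb, ha, by omega⟩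
    rw [Finset.sum_congr rfl hsplit]
    rw [Finset.sum_add_distrib, Finset.sum_add_distrib, Finset.sum_add_distrib]
    rw [← e1, ← e2]
    show qc (p :: l) = _
    rw [qc]
    congr 1
    congr 1
    -- remaining : l.length = Σ piv1 + Σ piv2
    have s1 : (∑ q ∈ F ×ˢ F, if q.1 = p ∧ q.2 ∈ l ∧ p < q.2 then 1 else 0)
        = (l.filter (fun x => decide (p < x))).length := by
      rw [Finset.sum_product]
      have : ∀ a ∈ F, (∑ b ∈ F, if a = p ∧ b ∈ l ∧ p < b then 1 else 0)
          = if a = p then (l.filter (fun x => decide (p < x))).length else 0 := by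
        intro a _
        by_cases hap : a = p
        · rw [if_pos hap, ← count_filter l hndl F hFl]
          apply Finset.sum_congr rfl
          intro b _
          congr 1
          simp [hap]
        · simp [hap]
      rw [Finset.sum_congr rfl this, Finset.sum_ite_eq' F p
        (fun _ => (l.filter (fun x => decide (p < x))).length)]
      rw [if_pos hpF]
    have s2 : (∑ q ∈ F ×ˢ F, if q.2 = p ∧ q.1 ∈ l ∧ q.1 < p then 1 else 0)
        = (l.filter (fun x => decide (x < p))).length := by
      rw [Finset.sum_product_right]
      have : ∀ b ∈ F, (∑ a ∈ F, if b = p ∧ a ∈ l ∧ a < p then 1 else 0)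
          = if b = p then (l.filter (fun x => decide (x < p))).length else 0 := by
        intro b _
        by_cases hbp : b = p
        · rw [if_pos hbp, ← count_filter l hndl F hFl]
          apply Finset.sum_congr rfl
          intro a _
          congr 1
          simp [hbp]
        · simp [hbp]
      rw [Finset.sum_congr rfl this, Finset.sum_ite_eq' F p
        (fun _ => (l.filter (fun x => decide (x < p))).length)]
      rw [if_pos hpF]
    rw [s1, s2, Nat.add_comm]
    exact (len_split p l hpl).symm


def sw (a c : ℕ) : ℕ → ℕ := fun x => if x = a then c else if x = c then a else x

lemma sw_invol (a c x : ℕ) : sw a c (sw a c x) = x := by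
  unfold sw; split_ifs <;> omega

lemma sw_inj (a c : ℕ) : Function.Injective (sw a c) := by
  intro x y h
  have := sw_invol a c x
  have := sw_invol a c y
  rw [h] at *
  omega

lemma sw_a (a c : ℕ) : sw a c a = c := by unfold sw; split_ifs <;> omega

lemma sw_c (a c : ℕ) : sw a c c = a := by unfold sw; split_ifs <;> omega

lemma sw_interval {a b c : ℕ} (hac : a ≤ c) (hcb : c ≤ b) (x : ℕ) :
    (a ≤ sw a c x ∧ sw a c x ≤ b) ↔ (a ≤ x ∧ x ≤ b) := by
  unfold sw; split_ifs <;> omega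

lemma sw_range {a c n : ℕ} (ha : a ∈ Finset.Icc 1 n) (hc : c ∈ Finset.Icc 1 n) (x : ℕ) :
    (1 ≤ sw a c x ∧ sw a c x ≤ n) ↔ (1 ≤ x ∧ x ≤ n) := by
  simp only [Finset.mem_Icc] at ha hc
  unfold sw; split_ifs <;> omega

lemma perm_map {a c n : ℕ} (ha : a ∈ Finset.Icc 1 n) (hc : c ∈ Finset.Icc 1 n)
    {σ : List ℕ} (hσ : σ.Perm (List.range' 1 n)) :
    (σ.map (sw a c)).Perm (List.range' 1 n) := by
  have hndσ : σ.Nodup := hσ.symm.nodup (List.nodup_range' (s := 1) (n := n))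
  rw [List.perm_ext_iff_of_nodup (hndσ.map (sw_inj a c)) (List.nodup_range' (s := 1) (n := n))]
  intro x
  have hmem : ∀ y, y ∈ σ ↔ (1 ≤ y ∧ y ≤ n) := by
    intro y
    rw [hσ.mem_iff, List.mem_range'_1]
    omega
  constructor
  · intro hx
    rcases List.mem_map.mp hx with ⟨y, hy, rfl⟩
    rw [List.mem_range'_1]
    have := (sw_range ha hc y).mpr ((hmem y).mp hy)
    omega
  · intro hx
    rw [List.mem_range'_1] at hx
    refine List.mem_map.mpr ⟨sw a c x, ?_, sw_invol a c x⟩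
    rw [hmem]
    exact (sw_range ha hc x).mpr (by omega)

lemma fI_map {a b c : ℕ} (hac : a ≤ c) (hcb : c ≤ b) (σ : List ℕ) :
    fI a b (σ.map (sw a c)) = (fI a b σ).map (sw a c) := by
  unfold fI
  rw [List.filter_map]
  have : ((fun x => decide (a ≤ x ∧ x ≤ b)) ∘ (sw a c)) = (fun x => decide (a ≤ x ∧ x ≤ b)) := by
    funext x
    simp only [Function.comp_apply, decide_eq_decide]
    exact sw_interval hac hcb x
  rw [this, List.head?_map]

lemma N_eq {n a b c : ℕ} (ha : a ∈ Finset.Icc 1 n) (hc : c ∈ Finset.Icc 1 n)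
    (hac : a ≤ c) (hcb : c ≤ b) :
    (∑ σ ∈ (List.range' 1 n).permutations.toFinset,
        if fI a b σ = some c then 1 else 0)
      = ∑ σ ∈ (List.range' 1 n).permutations.toFinset,
          if fI a b σ = some a then 1 else 0 := by
  apply Finset.sum_nbij' (fun σ => σ.map (sw a c)) (fun σ => σ.map (sw a c))
  · intro σ hσ
    rw [List.mem_toFinset, List.mem_permutations] at hσ ⊢
    exact perm_map ha hc hσ
  · intro σ hσ
    rw [List.mem_toFinset, List.mem_permutations] at hσ ⊢
    exact perm_map ha hc hσ
  · intro σ _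
    rw [List.map_map]
    have : (sw a c) ∘ (sw a c) = id := funext (sw_invol a c)
    rw [this, List.map_id]
  · intro σ _
    rw [List.map_map]
    have : (sw a c) ∘ (sw a c) = id := funext (sw_invol a c)
    rw [this, List.map_id]
  · intro σ _
    have h1 : fI a b (σ.map (sw a c)) = some a ↔ fI a b σ = some c := by
      rw [fI_map hac hcb]
      cases h : fI a b σ with
      | none => simp
      | some y =>
        simp only [Option.map_some, Option.some_inj]
        constructor
        · intro hy
          have h2 : sw a c y = sw a c c := by rw [hy, sw_c]
          exact sw_inj a c h2
        · intro hy
          rw [hy]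
          exact sw_c a c
    by_cases h : fI a b σ = some c
    · rw [if_pos h, if_pos (h1.mpr h)]
    · rw [if_neg h, if_neg (fun hh => h (h1.mp hh))]

lemma partition {n a b : ℕ} (ha : a ∈ Finset.Icc 1 n) (hab : a ≤ b)
    {σ : List ℕ} (hσ : σ.Perm (List.range' 1 n)) :
    (∑ c ∈ Finset.Icc a b, if fI a b σ = some c then 1 else 0) = 1 := by
  have haσ : a ∈ σ := by
    rw [hσ.mem_iff, List.mem_range'_1]
    simp only [Finset.mem_Icc] at ha
    omega
  have haL : a ∈ σ.filter (fun x => decide (a ≤ x ∧ x ≤ b)) :=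
    List.mem_filter.mpr ⟨haσ, by simp; omega⟩
  cases hL : σ.filter (fun x => decide (a ≤ x ∧ x ≤ b)) with
  | nil => rw [hL] at haL; simp at haL
  | cons c0 t =>
    have hfI : fI a b σ = some c0 := by unfold fI; rw [hL]; rfl
    have hc0 : c0 ∈ Finset.Icc a b := by
      have : c0 ∈ σ.filter (fun x => decide (a ≤ x ∧ x ≤ b)) := by
        rw [hL]; exact List.mem_cons_self
      have := List.of_mem_filter this
      simp only [decide_eq_true_eq] at this
      simp only [Finset.mem_Icc]
      exact this
    rw [hfI]
    simp only [Option.some_inj]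
    rw [Finset.sum_ite_eq (Finset.Icc a b) c0 (fun _ => 1), if_pos hc0]

lemma card_P (n : ℕ) : (List.range' 1 n).permutations.toFinset.card = n.factorial := by
  rw [List.toFinset_card_of_nodup (List.nodup_permutations _ (List.nodup_range' (s := 1) (n := n))),
    List.length_permutations, List.length_range']

lemma main_count {n a b : ℕ} (ha : a ∈ Finset.Icc 1 n) (hb : b ∈ Finset.Icc 1 n)
    (hab : a < b) :
    (b - a + 1) * (∑ σ ∈ (List.range' 1 n).permutations.toFinset, g a b σ)
      = 2 * n.factorial := by
  set P := (List.range' 1 n).permutations.toFinset with hP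
  have hmem : ∀ σ ∈ P, σ.Perm (List.range' 1 n) := by
    intro σ hσ
    rwa [hP, List.mem_toFinset, List.mem_permutations] at hσ
  have hg : ∀ σ ∈ P, g a b σ =
      (if fI a b σ = some a then 1 else 0) + (if fI a b σ = some b then 1 else 0) := by
    intro σ hσ
    have haσ : a ∈ σ := by
      rw [(hmem σ hσ).mem_iff, List.mem_range'_1]
      simp only [Finset.mem_Icc] at ha; omega
    have hbσ : b ∈ σ := by
      rw [(hmem σ hσ).mem_iff, List.mem_range'_1]
      simp only [Finset.mem_Icc] at hb; omega
    unfold g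
    by_cases h1 : fI a b σ = some a
    · rw [if_pos ⟨hab, haσ, hbσ, Or.inl h1⟩, if_pos h1, if_neg]
      intro h2
      rw [h1] at h2
      simp only [Option.some_inj] at h2
      omega
    · by_cases h2 : fI a b σ = some b
      · rw [if_pos ⟨hab, haσ, hbσ, Or.inr h2⟩, if_neg h1, if_pos h2]
      · rw [if_neg, if_neg h1, if_neg h2]
        rintro ⟨-, -, -, (h | h)⟩ <;> [exact h1 h; exact h2 h]
  rw [Finset.sum_congr rfl hg, Finset.sum_add_distrib]
  set Na := ∑ σ ∈ P, (if fI a b σ = some a then 1 else 0) with hNa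
  have hNb : (∑ σ ∈ P, if fI a b σ = some b then 1 else 0) = Na :=
    N_eq ha hb (le_of_lt hab) (le_refl b)
  have htot : (b - a + 1) * Na = n.factorial := by
    have h1 : ∑ c ∈ Finset.Icc a b, (∑ σ ∈ P, if fI a b σ = some c then 1 else 0)
        = (Finset.Icc a b).card * Na := by
      rw [Finset.sum_congr rfl (fun c hc => by
        simp only [Finset.mem_Icc] at hc
        have hc' : c ∈ Finset.Icc 1 n := by
          simp only [Finset.mem_Icc] at ha hb ⊢; omega
        exact N_eq ha hc' hc.1 hc.2), Finset.sum_const, smul_eq_mul]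
    have h2 : ∑ c ∈ Finset.Icc a b, (∑ σ ∈ P, if fI a b σ = some c then 1 else 0)
        = n.factorial := by
      rw [Finset.sum_comm]
      rw [Finset.sum_congr rfl (fun σ hσ => partition ha (le_of_lt hab) (hmem σ hσ))]
      rw [Finset.sum_const, smul_eq_mul, mul_one, card_P]
    rw [h1, Nat.card_Icc] at h2
    rw [show b - a + 1 = b + 1 - a from by omega]
    exact h2
  rw [hNb]
  calc (b - a + 1) * (Na + Na) = 2 * ((b - a + 1) * Na) := by ring
    _ = 2 * n.factorial := by rw [htot]


noncomputable def H (m : ℕ) : ℝ := ∑ j ∈ Finset.Icc 1 m, (1 : ℝ) / j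

lemma H_succ (m : ℕ) : H (m + 1) = H m + 1 / (m + 1 : ℝ) := by
  unfold H
  rw [Finset.sum_Icc_succ_top (by omega : 1 ≤ m + 1)]
  push_cast
  ring

lemma sum_H (n : ℕ) : ∑ b ∈ Finset.Icc 1 n, H b = (n + 1) * H n - n := by
  induction n with
  | zero => simp [H]
  | succ n ih =>
    rw [Finset.sum_Icc_succ_top (by omega : 1 ≤ n + 1), ih, H_succ]
    have h : ((n : ℝ) + 1) ≠ 0 := by positivity
    field_simp
    push_cast
    ring

lemma tail_harmonic (m : ℕ) : ∑ k ∈ Finset.Icc 2 (m + 1), (1 : ℝ) / k = H (m + 1) - 1 := by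
  have h : Finset.Icc 1 (m + 1) = insert 1 (Finset.Icc 2 (m + 1)) := by
    ext x
    simp only [Finset.mem_Icc, Finset.mem_insert]
    omega
  have h2 : (1 : ℕ) ∉ Finset.Icc 2 (m + 1) := by simp
  unfold H
  rw [h, Finset.sum_insert h2]
  norm_num

lemma reflect_sum (m : ℕ) :
    ∑ a ∈ Finset.Icc 1 m, (1 : ℝ) / ((m : ℝ) + 2 - a)
      = ∑ k ∈ Finset.Icc 2 (m + 1), (1 : ℝ) / k := by
  have lhs : ∑ a ∈ Finset.Icc 1 m, (1 : ℝ) / ((m : ℝ) + 2 - a)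
      = ∑ i ∈ Finset.range m, (1 : ℝ) / ((m : ℝ) + 1 - i) := by
    rw [show Finset.Icc 1 m = Finset.Ico 1 (m + 1) from by rw [Finset.Ico_add_one_right_eq_Icc],
      Finset.sum_Ico_eq_sum_range]
    apply Finset.sum_congr (by rw [Nat.add_sub_cancel])
    intro i _
    push_cast
    ring_nf
  have rhs : ∑ k ∈ Finset.Icc 2 (m + 1), (1 : ℝ) / k
      = ∑ i ∈ Finset.range m, (1 : ℝ) / ((i : ℝ) + 2) := by
    rw [show Finset.Icc 2 (m + 1) = Finset.Ico 2 (m + 2) from (Finset.Ico_add_one_right_eq_Icc (a := 2) (b := m + 1)).symm,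
      Finset.sum_Ico_eq_sum_range]
    apply Finset.sum_congr (by rw [Nat.add_sub_cancel])
    intro i _
    push_cast
    ring_nf
  rw [lhs, rhs, ← Finset.sum_range_reflect (fun i => (1 : ℝ) / ((m : ℝ) + 1 - i)) m]
  apply Finset.sum_congr rfl
  intro j hj
  have hjm : j < m := Finset.mem_range.mp hj
  have hc : ((m - 1 - j : ℕ) : ℝ) = (m : ℝ) - 1 - j := by
    have h1 : ((m - 1 - j : ℕ) : ℝ) = ((m - (1 + j) : ℕ) : ℝ) := by congr 1; omega
    rw [h1, Nat.cast_sub (by omega)]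
    push_cast
    ring
  rw [hc]
  congr 1
  ring

lemma inner_sum (n b : ℕ) (hb : b ∈ Finset.Icc 1 n) :
    (∑ a ∈ Finset.Icc 1 n, if a < b then 2 / ((b : ℝ) - a + 1) else 0)
      = 2 * (H b - 1) := by
  simp only [Finset.mem_Icc] at hb
  rw [← Finset.sum_filter]
  have hf : (Finset.Icc 1 n).filter (fun a => a < b) = Finset.Icc 1 (b - 1) := by
    ext x
    simp only [Finset.mem_filter, Finset.mem_Icc]
    omega
  rw [hf]
  obtain ⟨m, rfl⟩ : ∃ m, b = m + 1 := ⟨b - 1, by omega⟩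
  simp only [Nat.add_sub_cancel]
  have : ∀ a ∈ Finset.Icc 1 m, 2 / ((m + 1 : ℕ) - a + 1 : ℝ) = 2 * (1 / ((m : ℝ) + 2 - a)) := by
    intro a _
    push_cast
    ring_nf
  rw [Finset.sum_congr rfl this, ← Finset.mul_sum, reflect_sum, tail_harmonic]

lemma double_sum (n : ℕ) :
    (∑ q ∈ Finset.Icc 1 n ×ˢ Finset.Icc 1 n,
        if q.1 < q.2 then 2 / ((q.2 : ℝ) - q.1 + 1) else 0)
      = 2 * (n + 1) * H n - 4 * n := by
  rw [Finset.sum_product_right]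
  rw [Finset.sum_congr rfl (fun b hb => inner_sum n b hb)]
  have : ∑ b ∈ Finset.Icc 1 n, 2 * (H b - 1)
      = 2 * (∑ b ∈ Finset.Icc 1 n, H b) - 2 * n := by
    simp only [mul_sub, mul_one, Finset.sum_sub_distrib, Finset.sum_const,
      Nat.card_Icc, Nat.add_sub_cancel, nsmul_eq_mul, Finset.mul_sum]
    ring
  rw [this, sum_H]
  ring


end QCP


/-- The average number of Quicksort key comparisons over all `n!` permutations of
`{1, …, n}` equals `2 (n+1) Hₙ - 4 n`, where `Hₙ` is the `n`-th harmonic number. -/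
theorem stmt5 (n : ℕ) (hn : 1 ≤ n) :
    (1 / (n.factorial : ℝ)) *
        ((List.range' 1 n).permutations.map (fun σ => (qc σ : ℝ))).sum
      = 2 * (n + 1) * (∑ j ∈ Finset.Icc 1 n, (1 : ℝ) / j) - 4 * n := by
  classical
  set F := Finset.Icc 1 n with hF
  set P := (List.range' 1 n).permutations.toFinset with hP
  have hndperm : (List.range' 1 n).permutations.Nodup :=
    List.nodup_permutations _ (List.nodup_range' (s := 1) (n := n))
  rw [← List.sum_toFinset _ hndperm]
  have hmem : ∀ σ ∈ P, σ.Perm (List.range' 1 n) := by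
    intro σ hσ
    rwa [hP, List.mem_toFinset, List.mem_permutations] at hσ
  have step1 : ∀ σ ∈ P, (qc σ : ℝ) = ∑ q ∈ F ×ˢ F, (QCP.g q.1 q.2 σ : ℝ) := by
    intro σ hσ
    have hperm := hmem σ hσ
    have hnd : σ.Nodup := hperm.symm.nodup (List.nodup_range' (s := 1) (n := n))
    have hsub : σ.toFinset ⊆ F := by
      intro x hx
      rw [List.mem_toFinset, hperm.mem_iff, List.mem_range'_1] at hx
      rw [hF, Finset.mem_Icc]
      omega
    rw [QCP.qc_eq_sum F σ hnd hsub]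
    push_cast
    rfl
  rw [Finset.sum_congr rfl step1, Finset.sum_comm, Finset.mul_sum]
  have step2 : ∀ q ∈ F ×ˢ F,
      (1 / (n.factorial : ℝ)) * ∑ σ ∈ P, (QCP.g q.1 q.2 σ : ℝ)
        = if q.1 < q.2 then 2 / ((q.2 : ℝ) - q.1 + 1) else 0 := by
    rintro ⟨a, b⟩ hq
    rw [Finset.mem_product] at hq
    obtain ⟨ha, hb⟩ := hq
    by_cases hab : a < b
    · rw [if_pos hab]
      have hcount := QCP.main_count ha hb hab
      have hcast : ((b : ℝ) - a + 1) * (∑ σ ∈ P, (QCP.g a b σ : ℝ)) = 2 * n.factorial := by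
        have h1 : (((b - a + 1) * ∑ σ ∈ P, QCP.g a b σ : ℕ) : ℝ)
            = ((2 * n.factorial : ℕ) : ℝ) := by exact_mod_cast congrArg (fun k : ℕ => (k : ℝ)) hcount
        push_cast [Nat.cast_sub (le_of_lt hab)] at h1
        linear_combination h1
      have hfac : (n.factorial : ℝ) ≠ 0 := by
        exact_mod_cast Nat.factorial_ne_zero n
      have hden : ((b : ℝ) - a + 1) ≠ 0 := by
        have : (a : ℝ) < b := by exact_mod_cast hab
        nlinarith
      field_simp at hcast ⊢
      nlinarith [hcast]
    · rw [if_neg hab]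
      have : ∀ σ ∈ P, (QCP.g a b σ : ℝ) = 0 := by
        intro σ _
        unfold QCP.g
        rw [if_neg (fun h => hab h.1)]
        norm_num
      rw [Finset.sum_congr rfl this, Finset.sum_const, smul_zero, mul_zero]
  rw [Finset.sum_congr rfl step2, QCP.double_sum]
  rfl
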